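/- Let φ : ℚ[y1,y6,y10] → ℚ[y1,y6,y10] be the ℚ-algebra endomorphism determined by φ(y1) = k*y1, φ(y6) = a1*y1^6 + a2*y6, and φ(y10) = b1*y1^10 + b2*y1^4*y6 + b3*y10, where k, a1, a2, b1, b2, b3 ∈ ℚ. If φ(g20) ∈ I, φ(g24) ∈ I and φ(g30) ∈ I, then a1 = 0, b1 = 0, b2 = 0, a2 = k^6 and b3 = k^10. (This is the rigidity computation for X = E8/E7·S1: every degree-preserving endomorphism of H*(X;ℚ) sending the Kaehlerian class y1 to k*y1 is the Adams operator ψ^k.) -/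

import Mathlib

open MvPolynomial

namespace E8E7aux

noncomputable def sg : MvPolynomial (Fin 3) ℚ →ₐ[ℚ] MvPolynomial (Fin 3) ℚ :=
  aeval ![X 0, X 1 * X 0 ^ 6, X 2 * X 0 ^ 10]

noncomputable def tu : MvPolynomial (Fin 3) ℚ →ₐ[ℚ] MvPolynomial (Fin 3) ℚ :=
  aeval ![0, X 1, X 2]

lemma htuX0 : tu (X 0) = 0 := by simp [tu]
lemma htuX1 : tu (X 1) = X 1 := by simp [tu]
lemma htuX2 : tu (X 2) = X 2 := by simp [tu]
lemma htuC (r : ℚ) : tu (C r) = C r := by simp [tu, algebraMap_eq]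
lemma hsgX0 : sg (X 0) = X 0 := by simp [sg]
lemma hsgX1 : sg (X 1) = X 1 * X 0 ^ 6 := by simp [sg]
lemma hsgX2 : sg (X 2) = X 2 * X 0 ^ 10 := by simp [sg]
lemma hsgC (r : ℚ) : sg (C r) = C r := by simp [sg, algebraMap_eq]

lemma tu_sg (p : MvPolynomial (Fin 3) ℚ) : tu (sg p) = C (constantCoeff p) := by
  induction p using MvPolynomial.induction_on with
  | C a => simp [hsgC, htuC]
  | add p q hp hq => simp [map_add, hp, hq]
  | mul_X p i hp =>
      fin_cases i <;>
        simp [map_mul, hp, hsgX0, hsgX1, hsgX2, htuX0, htuX1, htuX2, map_pow]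

lemma X0_dvd_sub_tu (p : MvPolynomial (Fin 3) ℚ) : X 0 ∣ p - tu p := by
  induction p using MvPolynomial.induction_on with
  | C a => simp [htuC]
  | add p q hp hq =>
      rw [map_add, add_sub_add_comm]
      exact dvd_add hp hq
  | mul_X p i hp =>
      fin_cases i
      · show X 0 ∣ p * X 0 - tu (p * X 0)
        rw [map_mul, htuX0, mul_zero, sub_zero]
        exact dvd_mul_left _ _
      · show X 0 ∣ p * X 1 - tu (p * X 1)
        rw [map_mul, htuX1, ← sub_mul]
        exact Dvd.dvd.mul_right hp _
      · show X 0 ∣ p * X 2 - tu (p * X 2)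
        rw [map_mul, htuX2, ← sub_mul]
        exact Dvd.dvd.mul_right hp _

lemma X0_dvd_of_tu_eq_zero {p : MvPolynomial (Fin 3) ℚ} (h : tu p = 0) : X 0 ∣ p := by
  have := X0_dvd_sub_tu p
  rwa [h, sub_zero] at this

lemma sq_ne_15105 (q : ℚ) : q ^ 2 ≠ 15105 := by
  intro h
  have h' : q * q = (15105 : ℚ) := by linear_combination h
  have hnum : (q * q).num = q.num * q.num := Rat.mul_self_num q
  rw [h'] at hnum
  have hZ : q.num * q.num = 15105 := by
    rw [← hnum]; norm_num
  have h9 : ((q.num : ZMod 9)) * ((q.num : ZMod 9)) = 3 := by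
    have := congrArg (fun z : ℤ => (z : ZMod 9)) hZ
    push_cast at this
    rw [this]
    decide
  exact (by decide : ∀ x : ZMod 9, x * x ≠ 3) _ h9

lemma octic_ne (q : ℚ) :
    225*q^8 + 14400*q^7 - 70650*q^6 + 122400*q^5 - 98415*q^4 + 34470*q^3
      - 315*q^2 - 2925*q + 549 ≠ 0 := by
  intro h
  have hd0 : ((q.den : ℤ) : ℚ) ≠ 0 := by
    push_cast
    exact_mod_cast q.den_nz
  have h1 : ((q.num : ℤ) : ℚ) = q * ((q.den : ℤ) : ℚ) := by
    have e : ((q.num : ℤ) : ℚ) / ((q.den : ℤ) : ℚ) = q := by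
      exact_mod_cast Rat.num_div_den q
    exact (div_eq_iff hd0).mp e
  have h2 : ((225*q.num^8 + 14400*q.num^7*(q.den:ℤ) - 70650*q.num^6*(q.den:ℤ)^2
      + 122400*q.num^5*(q.den:ℤ)^3 - 98415*q.num^4*(q.den:ℤ)^4 + 34470*q.num^3*(q.den:ℤ)^5
      - 315*q.num^2*(q.den:ℤ)^6 - 2925*q.num*(q.den:ℤ)^7 + 549*(q.den:ℤ)^8 : ℤ) : ℚ) = 0 := by
    push_cast
    rw [h1]
    linear_combination ((q.den : ℤ) : ℚ)^8 * h
  have hZ : (225*q.num^8 + 14400*q.num^7*(q.den:ℤ) - 70650*q.num^6*(q.den:ℤ)^2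
      + 122400*q.num^5*(q.den:ℤ)^3 - 98415*q.num^4*(q.den:ℤ)^4 + 34470*q.num^3*(q.den:ℤ)^5
      - 315*q.num^2*(q.den:ℤ)^6 - 2925*q.num*(q.den:ℤ)^7 + 549*(q.den:ℤ)^8 : ℤ) = 0 := by
    exact_mod_cast h2
  have h3 : 225*(q.num : ZMod 2)^8 + 14400*(q.num : ZMod 2)^7*((q.den:ℤ) : ZMod 2)
      - 70650*(q.num : ZMod 2)^6*((q.den:ℤ) : ZMod 2)^2
      + 122400*(q.num : ZMod 2)^5*((q.den:ℤ) : ZMod 2)^3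
      - 98415*(q.num : ZMod 2)^4*((q.den:ℤ) : ZMod 2)^4
      + 34470*(q.num : ZMod 2)^3*((q.den:ℤ) : ZMod 2)^5
      - 315*(q.num : ZMod 2)^2*((q.den:ℤ) : ZMod 2)^6
      - 2925*(q.num : ZMod 2)*((q.den:ℤ) : ZMod 2)^7 + 549*((q.den:ℤ) : ZMod 2)^8 = 0 := by
    have := congrArg (fun z : ℤ => (z : ZMod 2)) hZ
    push_cast at this
    convert this using 2 <;> simp only [Int.cast_natCast]
  have hdec : ∀ x y : ZMod 2,
      225*x^8 + 14400*x^7*y - 70650*x^6*y^2 + 122400*x^5*y^3 - 98415*x^4*y^4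
        + 34470*x^3*y^5 - 315*x^2*y^6 - 2925*x*y^7 + 549*y^8 = 0 → x = 0 ∧ y = 0 := by
    decide
  obtain ⟨hm2, hn2⟩ := hdec _ _ h3
  rw [ZMod.intCast_zmod_eq_zero_iff_dvd] at hm2 hn2
  have hm2' : (2 : ℕ) ∣ q.num.natAbs := by
    have := Int.natAbs_dvd_natAbs.mpr hm2
    simpa using this
  have hn2' : (2 : ℕ) ∣ q.den := by exact_mod_cast hn2
  have hco : Nat.gcd q.num.natAbs q.den = 1 := q.reduced
  have : (2 : ℕ) ∣ 1 := hco ▸ Nat.dvd_gcd hm2' hn2'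
  norm_num at this

end E8E7aux

open E8E7aux

set_option maxHeartbeats 4000000 in
/-- Rigidity computation for `X = E₈/E₇·S¹`. -/
theorem E8_E7_rigidity (k a1 a2 b1 b2 b3 : ℚ)
    (y1 y6 y10 g20 g24 g30 : MvPolynomial (Fin 3) ℚ)
    (hy1 : y1 = X 0) (hy6 : y6 = X 1) (hy10 : y10 = X 2)
    (hg20 : g20 = 3 * y10 ^ 2 + 10 * y1 ^ 2 * y6 ^ 3 + 18 * y1 ^ 4 * y6 * y10
      - 12 * y1 ^ 10 * y10 - 18 * y1 ^ 8 * y6 ^ 2 + 9 * y1 ^ 14 * y6 - y1 ^ 20)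
    (hg24 : g24 = 5 * y6 ^ 4 + 30 * y1 ^ 2 * y6 ^ 2 * y10 + 15 * y1 ^ 4 * y10 ^ 2
      - 15 * y1 ^ 14 * y10 - 15 * y1 ^ 12 * y6 ^ 2 + 10 * y1 ^ 18 * y6 - y1 ^ 24)
    (hg30 : g30 = 12 * y1 ^ 4 * y6 * y10 ^ 2 + 24 * y1 ^ 14 * y6 * y10 + 56 * y1 ^ 24 * y6
      - 36 * y1 ^ 10 * y10 ^ 2 - 32 * y10 ^ 3 + 4 * y6 ^ 5 - 9 * y1 ^ 30
      - 48 * y1 ^ 20 * y10 + 60 * y1 ^ 6 * y6 ^ 4 - 64 * y1 ^ 18 * y6 ^ 2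
      + 96 * y1 ^ 8 * y10 * y6 ^ 2 - 44 * y1 ^ 12 * y6 ^ 3)
    (I : Ideal (MvPolynomial (Fin 3) ℚ)) (hI : I = Ideal.span {g20, g24, g30})
    (φ : MvPolynomial (Fin 3) ℚ →ₐ[ℚ] MvPolynomial (Fin 3) ℚ)
    (hφ1 : φ y1 = C k * y1)
    (hφ6 : φ y6 = C a1 * y1 ^ 6 + C a2 * y6)
    (hφ10 : φ y10 = C b1 * y1 ^ 10 + C b2 * y1 ^ 4 * y6 + C b3 * y10)
    (h20 : φ g20 ∈ I) (h24 : φ g24 ∈ I) (h30 : φ g30 ∈ I) :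
    a1 = 0 ∧ b1 = 0 ∧ b2 = 0 ∧ a2 = k ^ 6 ∧ b3 = k ^ 10 := by
  clear h30
  subst hy1 hy6 hy10 hI
  rw [Ideal.mem_span_insert] at h20 h24
  obtain ⟨p1, w1, hw1, e20⟩ := h20
  rw [Ideal.mem_span_insert] at hw1
  obtain ⟨p2, w2, hw2, ew⟩ := hw1
  rw [Ideal.mem_span_singleton] at hw2
  obtain ⟨p3, e3⟩ := hw2
  rw [ew, e3] at e20
  obtain ⟨q1, v1, hv1, e24⟩ := h24
  rw [Ideal.mem_span_insert] at hv1
  obtain ⟨q2, v2, hv2, ev⟩ := hv1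
  rw [Ideal.mem_span_singleton] at hv2
  obtain ⟨q3, e3'⟩ := hv2
  rw [ev, e3'] at e24
  rw [hg20, hg24, hg30] at e20 e24
  have hH20ne : (3*(X 2:MvPolynomial (Fin 3) ℚ)^2 + 10*X 1^3 + 18*X 1*X 2 - 12*X 2 - 18*X 1^2 + 9*X 1 - 1) ≠ 0 := by
    intro hcon
    have h0 := congrArg (eval ![(0:ℚ), 0, 0]) hcon
    simp only [map_add, map_sub, map_mul, map_pow, map_ofNat, map_one, eval_C, eval_X, Matrix.cons_val_zero, Matrix.cons_val_one, Matrix.head_cons, Matrix.cons_val_two, Matrix.tail_cons] at h0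
    norm_num at h0
  have hs1 := congrArg sg e20
  simp only [map_add, map_sub, map_mul, map_pow, map_ofNat, map_one, hφ1, hφ6, hφ10, hsgX0, hsgX1, hsgX2, hsgC] at hs1
  have hs2 : (X 0 : MvPolynomial (Fin 3) ℚ)^20 * (3*(C b1 + C b2 * X 1 + C b3 * X 2 : MvPolynomial (Fin 3) ℚ)^2 + 10*(C k:MvPolynomial (Fin 3) ℚ)^2*(C a1 + C a2 * X 1 : MvPolynomial (Fin 3) ℚ)^3 + 18*(C k:MvPolynomial (Fin 3) ℚ)^4*(C a1 + C a2 * X 1 : MvPolynomial (Fin 3) ℚ)*(C b1 + C b2 * X 1 + C b3 * X 2 : MvPolynomial (Fin 3) ℚ) - 12*(C k:MvPolynomial (Fin 3) ℚ)^10*(C b1 + C b2 * X 1 + C b3 * X 2 : MvPolynomial (Fin 3) ℚ) - 18*(C k:MvPolynomial (Fin 3) ℚ)^8*(C a1 + C a2 * X 1 : MvPolynomial (Fin 3) ℚ)^2 + 9*(C k:MvPolynomial (Fin 3) ℚ)^14*(C a1 + C a2 * X 1 : MvPolynomial (Fin 3) ℚ) - (C k:MvPolynomial (Fin 3) ℚ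)^20)
      = X 0^20 * (sg p1 * (3*(X 2:MvPolynomial (Fin 3) ℚ)^2 + 10*X 1^3 + 18*X 1*X 2 - 12*X 2 - 18*X 1^2 + 9*X 1 - 1) + X 0^4 * (sg p2 * (5*(X 1:MvPolynomial (Fin 3) ℚ)^4 + 30*X 1^2*X 2 + 15*X 2^2 - 15*X 2 - 15*X 1^2 + 10*X 1 - 1)) + X 0^10 * (sg p3 * (12*(X 1:MvPolynomial (Fin 3) ℚ)*X 2^2 + 24*X 1*X 2 + 56*X 1 - 36*X 2^2 - 32*X 2^3 + 4*X 1^5 - 9 - 48*X 2 + 60*X 1^4 - 64*X 1^2 + 96*X 2*X 1^2 - 44*X 1^3))) := by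
    linear_combination hs1
  have hs3 := mul_left_cancel₀ (pow_ne_zero 20 (X_ne_zero (R := ℚ) 0)) hs2
  have E1' := congrArg tu hs3
  simp only [map_add, map_sub, map_mul, map_pow, map_ofNat, map_one, htuX0, htuX1, htuX2, htuC, tu_sg] at E1'
  have E1 : (3*(C b1 + C b2 * X 1 + C b3 * X 2 : MvPolynomial (Fin 3) ℚ)^2 + 10*(C k:MvPolynomial (Fin 3) ℚ)^2*(C a1 + C a2 * X 1 : MvPolynomial (Fin 3) ℚ)^3 + 18*(C k:MvPolynomial (Fin 3) ℚ)^4*(C a1 + C a2 * X 1 : MvPolynomial (Fin 3) ℚ)*(C b1 + C b2 * X 1 + C b3 * X 2 : MvPolynomial (Fin 3) ℚ) - 12*(C k:MvPolynomial (Fin 3) ℚ)^10*(C b1 + C b2 * X 1 + C b3 * X 2 : MvPolynomial (Fin 3) ℚ) - 18*(C k:MvPolynomial (Fin 3) ℚ)^8*(C a1 + C a2 * X 1 : MvPolynomial (Fin 3) ℚ)^2 + 9*(C k:MvPolynomial (Fin 3) ℚ)^14*(C a1 + C a2 * X 1 : MvPolynomial (Fin 3) ℚ) - (C k:MvPolynomial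 (Fin 3) ℚ)^20) = C (constantCoeff p1) * (3*(X 2:MvPolynomial (Fin 3) ℚ)^2 + 10*X 1^3 + 18*X 1*X 2 - 12*X 2 - 18*X 1^2 + 9*X 1 - 1) := by
    linear_combination E1'
  have ht1 := congrArg sg e24
  simp only [map_add, map_sub, map_mul, map_pow, map_ofNat, map_one, hφ1, hφ6, hφ10, hsgX0, hsgX1, hsgX2, hsgC] at ht1
  have ht2 : (X 0 : MvPolynomial (Fin 3) ℚ)^20 * (X 0^4 * (5*(C a1 + C a2 * X 1 : MvPolynomial (Fin 3) ℚ)^4 + 30*(C k:MvPolynomial (Fin 3) ℚ)^2*(C a1 + C a2 * X 1 : MvPolynomial (Fin 3) ℚ)^2*(C b1 + C b2 * X 1 + C b3 * X 2 : MvPolynomial (Fin 3) ℚ) + 15*(C k:MvPolynomial (Fin 3) ℚ)^4*(C b1 + C b2 * X 1 + C b3 * X 2 : MvPolynomial (Fin 3) ℚ)^2 - 15*(C k:MvPolynomial (Fin 3) ℚ)^14*(C b1 + C b2 * X 1 + C b3 * X 2 : MvPolynomial (Fin 3) ℚ) - 15*(C k:MvPolynomial (Fin 3) ℚ)^12*(C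 a1 + C a2 * X 1 : MvPolynomial (Fin 3) ℚ)^2 + 10*(C k:MvPolynomial (Fin 3) ℚ)^18*(C a1 + C a2 * X 1 : MvPolynomial (Fin 3) ℚ) - (C k:MvPolynomial (Fin 3) ℚ)^24))
      = X 0^20 * (sg q1 * (3*(X 2:MvPolynomial (Fin 3) ℚ)^2 + 10*X 1^3 + 18*X 1*X 2 - 12*X 2 - 18*X 1^2 + 9*X 1 - 1) + X 0^4 * (sg q2 * (5*(X 1:MvPolynomial (Fin 3) ℚ)^4 + 30*X 1^2*X 2 + 15*X 2^2 - 15*X 2 - 15*X 1^2 + 10*X 1 - 1)) + X 0^10 * (sg q3 * (12*(X 1:MvPolynomial (Fin 3) ℚ)*X 2^2 + 24*X 1*X 2 + 56*X 1 - 36*X 2^2 - 32*X 2^3 + 4*X 1^5 - 9 - 48*X 2 + 60*X 1^4 - 64*X 1^2 + 96*X 2*X 1^2 - 44*X 1^3))) := by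
    linear_combination ht1
  have hpe0 := mul_left_cancel₀ (pow_ne_zero 20 (X_ne_zero (R := ℚ) 0)) ht2
  have hz1pre := congrArg tu hpe0
  simp only [map_add, map_sub, map_mul, map_pow, map_ofNat, map_one, htuX0, htuX1, htuX2, htuC, tu_sg] at hz1pre
  have hzz1 : C (constantCoeff q1) * (3*(X 2:MvPolynomial (Fin 3) ℚ)^2 + 10*X 1^3 + 18*X 1*X 2 - 12*X 2 - 18*X 1^2 + 9*X 1 - 1) = 0 := by
    linear_combination -hz1pre
  have hz1 : C (constantCoeff q1) = 0 :=
    (mul_eq_zero.mp hzz1).resolve_right hH20ne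
  obtain ⟨A1, hA1⟩ := X0_dvd_of_tu_eq_zero (p := sg q1) (by rw [tu_sg]; exact hz1)
  have hcc1 : (X 0 : MvPolynomial (Fin 3) ℚ) * (X 0^3 * (5*(C a1 + C a2 * X 1 : MvPolynomial (Fin 3) ℚ)^4 + 30*(C k:MvPolynomial (Fin 3) ℚ)^2*(C a1 + C a2 * X 1 : MvPolynomial (Fin 3) ℚ)^2*(C b1 + C b2 * X 1 + C b3 * X 2 : MvPolynomial (Fin 3) ℚ) + 15*(C k:MvPolynomial (Fin 3) ℚ)^4*(C b1 + C b2 * X 1 + C b3 * X 2 : MvPolynomial (Fin 3) ℚ)^2 - 15*(C k:MvPolynomial (Fin 3) ℚ)^14*(C b1 + C b2 * X 1 + C b3 * X 2 : MvPolynomial (Fin 3) ℚ) - 15*(C k:MvPolynomial (Fin 3) ℚ)^12*(C a1 + C a2 * X 1 : MvPolynomial (Fin 3) ℚ)^2 + 10*(C k:MvPolynomial (Fin 3) ℚ)^18*(C a1 + C a2 * X 1 : MvPolynomial (Fin 3) ℚ) - (C k:MvPolynomial (Fin 3) ℚ)^24))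
      = X 0 * (A1 * (3*(X 2:MvPolynomial (Fin 3) ℚ)^2 + 10*X 1^3 + 18*X 1*X 2 - 12*X 2 - 18*X 1^2 + 9*X 1 - 1) + X 0^3 * (sg q2 * (5*(X 1:MvPolynomial (Fin 3) ℚ)^4 + 30*X 1^2*X 2 + 15*X 2^2 - 15*X 2 - 15*X 1^2 + 10*X 1 - 1)) + X 0^9 * (sg q3 * (12*(X 1:MvPolynomial (Fin 3) ℚ)*X 2^2 + 24*X 1*X 2 + 56*X 1 - 36*X 2^2 - 32*X 2^3 + 4*X 1^5 - 9 - 48*X 2 + 60*X 1^4 - 64*X 1^2 + 96*X 2*X 1^2 - 44*X 1^3))) := by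
    linear_combination hpe0 + (3*(X 2:MvPolynomial (Fin 3) ℚ)^2 + 10*X 1^3 + 18*X 1*X 2 - 12*X 2 - 18*X 1^2 + 9*X 1 - 1) * hA1
  have hpe1 := mul_left_cancel₀ (X_ne_zero (R := ℚ) 0) hcc1
  have hz2pre := congrArg tu hpe1
  simp only [map_add, map_sub, map_mul, map_pow, map_ofNat, map_one, htuX0, htuX1, htuX2, htuC, tu_sg] at hz2pre
  have hzz2 : tu A1 * (3*(X 2:MvPolynomial (Fin 3) ℚ)^2 + 10*X 1^3 + 18*X 1*X 2 - 12*X 2 - 18*X 1^2 + 9*X 1 - 1) = 0 := by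
    linear_combination -hz2pre
  have hz2 : tu A1 = 0 :=
    (mul_eq_zero.mp hzz2).resolve_right hH20ne
  obtain ⟨A2, hA2⟩ := X0_dvd_of_tu_eq_zero (p := A1) (hz2)
  have hcc2 : (X 0 : MvPolynomial (Fin 3) ℚ) * (X 0^2 * (5*(C a1 + C a2 * X 1 : MvPolynomial (Fin 3) ℚ)^4 + 30*(C k:MvPolynomial (Fin 3) ℚ)^2*(C a1 + C a2 * X 1 : MvPolynomial (Fin 3) ℚ)^2*(C b1 + C b2 * X 1 + C b3 * X 2 : MvPolynomial (Fin 3) ℚ) + 15*(C k:MvPolynomial (Fin 3) ℚ)^4*(C b1 + C b2 * X 1 + C b3 * X 2 : MvPolynomial (Fin 3) ℚ)^2 - 15*(C k:MvPolynomial (Fin 3) ℚ)^14*(C b1 + C b2 * X 1 + C b3 * X 2 : MvPolynomial (Fin 3) ℚ) - 15*(C k:MvPolynomial (Fin 3) ℚ)^12*(C a1 + C a2 * X 1 : MvPolynomial (Fin 3) ℚ)^2 + 10*(C k:MvPolynomial (Fin 3) ℚ)^18*(C a1 + C a2 * X 1 : MvPolynomial (Fin 3) ℚ) - (C k:MvPolynomial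 (Fin 3) ℚ)^24))
      = X 0 * (A2 * (3*(X 2:MvPolynomial (Fin 3) ℚ)^2 + 10*X 1^3 + 18*X 1*X 2 - 12*X 2 - 18*X 1^2 + 9*X 1 - 1) + X 0^2 * (sg q2 * (5*(X 1:MvPolynomial (Fin 3) ℚ)^4 + 30*X 1^2*X 2 + 15*X 2^2 - 15*X 2 - 15*X 1^2 + 10*X 1 - 1)) + X 0^8 * (sg q3 * (12*(X 1:MvPolynomial (Fin 3) ℚ)*X 2^2 + 24*X 1*X 2 + 56*X 1 - 36*X 2^2 - 32*X 2^3 + 4*X 1^5 - 9 - 48*X 2 + 60*X 1^4 - 64*X 1^2 + 96*X 2*X 1^2 - 44*X 1^3))) := by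
    linear_combination hpe1 + (3*(X 2:MvPolynomial (Fin 3) ℚ)^2 + 10*X 1^3 + 18*X 1*X 2 - 12*X 2 - 18*X 1^2 + 9*X 1 - 1) * hA2
  have hpe2 := mul_left_cancel₀ (X_ne_zero (R := ℚ) 0) hcc2
  have hz3pre := congrArg tu hpe2
  simp only [map_add, map_sub, map_mul, map_pow, map_ofNat, map_one, htuX0, htuX1, htuX2, htuC, tu_sg] at hz3pre
  have hzz3 : tu A2 * (3*(X 2:MvPolynomial (Fin 3) ℚ)^2 + 10*X 1^3 + 18*X 1*X 2 - 12*X 2 - 18*X 1^2 + 9*X 1 - 1) = 0 := by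
    linear_combination -hz3pre
  have hz3 : tu A2 = 0 :=
    (mul_eq_zero.mp hzz3).resolve_right hH20ne
  obtain ⟨A3, hA3⟩ := X0_dvd_of_tu_eq_zero (p := A2) (hz3)
  have hcc3 : (X 0 : MvPolynomial (Fin 3) ℚ) * (X 0^1 * (5*(C a1 + C a2 * X 1 : MvPolynomial (Fin 3) ℚ)^4 + 30*(C k:MvPolynomial (Fin 3) ℚ)^2*(C a1 + C a2 * X 1 : MvPolynomial (Fin 3) ℚ)^2*(C b1 + C b2 * X 1 + C b3 * X 2 : MvPolynomial (Fin 3) ℚ) + 15*(C k:MvPolynomial (Fin 3) ℚ)^4*(C b1 + C b2 * X 1 + C b3 * X 2 : MvPolynomial (Fin 3) ℚ)^2 - 15*(C k:MvPolynomial (Fin 3) ℚ)^14*(C b1 + C b2 * X 1 + C b3 * X 2 : MvPolynomial (Fin 3) ℚ) - 15*(C k:MvPolynomial (Fin 3) ℚ)^12*(C a1 + C a2 * X 1 : MvPolynomial (Fin 3) ℚ)^2 + 10*(C k:MvPolynomial (Fin 3) ℚ)^18*(C a1 + C a2 * X 1 : MvPolynomial (Fin 3) ℚ) - (C k:MvPolynomial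 (Fin 3) ℚ)^24))
      = X 0 * (A3 * (3*(X 2:MvPolynomial (Fin 3) ℚ)^2 + 10*X 1^3 + 18*X 1*X 2 - 12*X 2 - 18*X 1^2 + 9*X 1 - 1) + X 0^1 * (sg q2 * (5*(X 1:MvPolynomial (Fin 3) ℚ)^4 + 30*X 1^2*X 2 + 15*X 2^2 - 15*X 2 - 15*X 1^2 + 10*X 1 - 1)) + X 0^7 * (sg q3 * (12*(X 1:MvPolynomial (Fin 3) ℚ)*X 2^2 + 24*X 1*X 2 + 56*X 1 - 36*X 2^2 - 32*X 2^3 + 4*X 1^5 - 9 - 48*X 2 + 60*X 1^4 - 64*X 1^2 + 96*X 2*X 1^2 - 44*X 1^3))) := by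
    linear_combination hpe2 + (3*(X 2:MvPolynomial (Fin 3) ℚ)^2 + 10*X 1^3 + 18*X 1*X 2 - 12*X 2 - 18*X 1^2 + 9*X 1 - 1) * hA3
  have hpe3 := mul_left_cancel₀ (X_ne_zero (R := ℚ) 0) hcc3
  have hz4pre := congrArg tu hpe3
  simp only [map_add, map_sub, map_mul, map_pow, map_ofNat, map_one, htuX0, htuX1, htuX2, htuC, tu_sg] at hz4pre
  have hzz4 : tu A3 * (3*(X 2:MvPolynomial (Fin 3) ℚ)^2 + 10*X 1^3 + 18*X 1*X 2 - 12*X 2 - 18*X 1^2 + 9*X 1 - 1) = 0 := by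
    linear_combination -hz4pre
  have hz4 : tu A3 = 0 :=
    (mul_eq_zero.mp hzz4).resolve_right hH20ne
  obtain ⟨A4, hA4⟩ := X0_dvd_of_tu_eq_zero (p := A3) (hz4)
  have hcc4 : (X 0 : MvPolynomial (Fin 3) ℚ) * (X 0^0 * (5*(C a1 + C a2 * X 1 : MvPolynomial (Fin 3) ℚ)^4 + 30*(C k:MvPolynomial (Fin 3) ℚ)^2*(C a1 + C a2 * X 1 : MvPolynomial (Fin 3) ℚ)^2*(C b1 + C b2 * X 1 + C b3 * X 2 : MvPolynomial (Fin 3) ℚ) + 15*(C k:MvPolynomial (Fin 3) ℚ)^4*(C b1 + C b2 * X 1 + C b3 * X 2 : MvPolynomial (Fin 3) ℚ)^2 - 15*(C k:MvPolynomial (Fin 3) ℚ)^14*(C b1 + C b2 * X 1 + C b3 * X 2 : MvPolynomial (Fin 3) ℚ) - 15*(C k:MvPolynomial (Fin 3) ℚ)^12*(C a1 + C a2 * X 1 : MvPolynomial (Fin 3) ℚ)^2 + 10*(C k:MvPolynomial (Fin 3) ℚ)^18*(C a1 + C a2 * X 1 : MvPolynomial (Fin 3) ℚ) - (C k:MvPolynomial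 (Fin 3) ℚ)^24))
      = X 0 * (A4 * (3*(X 2:MvPolynomial (Fin 3) ℚ)^2 + 10*X 1^3 + 18*X 1*X 2 - 12*X 2 - 18*X 1^2 + 9*X 1 - 1) + X 0^0 * (sg q2 * (5*(X 1:MvPolynomial (Fin 3) ℚ)^4 + 30*X 1^2*X 2 + 15*X 2^2 - 15*X 2 - 15*X 1^2 + 10*X 1 - 1)) + X 0^6 * (sg q3 * (12*(X 1:MvPolynomial (Fin 3) ℚ)*X 2^2 + 24*X 1*X 2 + 56*X 1 - 36*X 2^2 - 32*X 2^3 + 4*X 1^5 - 9 - 48*X 2 + 60*X 1^4 - 64*X 1^2 + 96*X 2*X 1^2 - 44*X 1^3))) := by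
    linear_combination hpe3 + (3*(X 2:MvPolynomial (Fin 3) ℚ)^2 + 10*X 1^3 + 18*X 1*X 2 - 12*X 2 - 18*X 1^2 + 9*X 1 - 1) * hA4
  have hpe4 := mul_left_cancel₀ (X_ne_zero (R := ℚ) 0) hcc4
  have E2' := congrArg tu hpe4
  simp only [map_add, map_sub, map_mul, map_pow, map_ofNat, map_one, htuX0, htuX1, htuX2, htuC, tu_sg] at E2'
  have E2 : (5*(C a1 + C a2 * X 1 : MvPolynomial (Fin 3) ℚ)^4 + 30*(C k:MvPolynomial (Fin 3) ℚ)^2*(C a1 + C a2 * X 1 : MvPolynomial (Fin 3) ℚ)^2*(C b1 + C b2 * X 1 + C b3 * X 2 : MvPolynomial (Fin 3) ℚ) + 15*(C k:MvPolynomial (Fin 3) ℚ)^4*(C b1 + C b2 * X 1 + C b3 * X 2 : MvPolynomial (Fin 3) ℚ)^2 - 15*(C k:MvPolynomial (Fin 3) ℚ)^14*(C b1 + C b2 * X 1 + C b3 * X 2 : MvPolynomial (Fin 3) ℚ) - 15*(C k:MvPolynomial (Fin 3) ℚ)^12*(C a1 + C a2 * X 1 : MvPolynomial (Fin 3) ℚ)^2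 + 10*(C k:MvPolynomial (Fin 3) ℚ)^18*(C a1 + C a2 * X 1 : MvPolynomial (Fin 3) ℚ) - (C k:MvPolynomial (Fin 3) ℚ)^24) = tu A4 * (3*(X 2:MvPolynomial (Fin 3) ℚ)^2 + 10*X 1^3 + 18*X 1*X 2 - 12*X 2 - 18*X 1^2 + 9*X 1 - 1) + C (constantCoeff q2) * (5*(X 1:MvPolynomial (Fin 3) ℚ)^4 + 30*X 1^2*X 2 + 15*X 2^2 - 15*X 2 - 15*X 1^2 + 10*X 1 - 1) := by
    linear_combination E2'
  have v00 : 3*(b1 + b2*(0) + b3*(0))^2 + 10*k^2*(a1 + a2*(0))^3 + 18*k^4*(a1 + a2*(0))*(b1 + b2*(0) + b3*(0)) - 12*k^10*(b1 + b2*(0) + b3*(0)) - 18*k^8*(a1 + a2*(0))^2 + 9*k^14*(a1 + a2*(0)) - k^20 = constantCoeff p1 * ((-1)) := by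
    have h := congrArg (eval ![(0:ℚ), 0, 0]) E1
    simp only [map_add, map_sub, map_mul, map_pow, map_ofNat, map_one, eval_C, eval_X, Matrix.cons_val_zero, Matrix.cons_val_one, Matrix.head_cons, Matrix.cons_val_two, Matrix.tail_cons] at h
    linear_combination h
  have v10 : 3*(b1 + b2*(1) + b3*(0))^2 + 10*k^2*(a1 + a2*(1))^3 + 18*k^4*(a1 + a2*(1))*(b1 + b2*(1) + b3*(0)) - 12*k^10*(b1 + b2*(1) + b3*(0)) - 18*k^8*(a1 + a2*(1))^2 + 9*k^14*(a1 + a2*(1)) - k^20 = constantCoeff p1 * (0) := by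
    have h := congrArg (eval ![(0:ℚ), 1, 0]) E1
    simp only [map_add, map_sub, map_mul, map_pow, map_ofNat, map_one, eval_C, eval_X, Matrix.cons_val_zero, Matrix.cons_val_one, Matrix.head_cons, Matrix.cons_val_two, Matrix.tail_cons] at h
    linear_combination h
  have vm10 : 3*(b1 + b2*((-1)) + b3*(0))^2 + 10*k^2*(a1 + a2*((-1)))^3 + 18*k^4*(a1 + a2*((-1)))*(b1 + b2*((-1)) + b3*(0)) - 12*k^10*(b1 + b2*((-1)) + b3*(0)) - 18*k^8*(a1 + a2*((-1)))^2 + 9*k^14*(a1 + a2*((-1))) - k^20 = constantCoeff p1 * ((-38)) := by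
    have h := congrArg (eval ![(0:ℚ), (-1), 0]) E1
    simp only [map_add, map_sub, map_mul, map_pow, map_ofNat, map_one, eval_C, eval_X, Matrix.cons_val_zero, Matrix.cons_val_one, Matrix.head_cons, Matrix.cons_val_two, Matrix.tail_cons] at h
    linear_combination h
  have v20 : 3*(b1 + b2*(2) + b3*(0))^2 + 10*k^2*(a1 + a2*(2))^3 + 18*k^4*(a1 + a2*(2))*(b1 + b2*(2) + b3*(0)) - 12*k^10*(b1 + b2*(2) + b3*(0)) - 18*k^8*(a1 + a2*(2))^2 + 9*k^14*(a1 + a2*(2)) - k^20 = constantCoeff p1 * (25) := by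
    have h := congrArg (eval ![(0:ℚ), 2, 0]) E1
    simp only [map_add, map_sub, map_mul, map_pow, map_ofNat, map_one, eval_C, eval_X, Matrix.cons_val_zero, Matrix.cons_val_one, Matrix.head_cons, Matrix.cons_val_two, Matrix.tail_cons] at h
    linear_combination h
  have v01 : 3*(b1 + b2*(0) + b3*(1))^2 + 10*k^2*(a1 + a2*(0))^3 + 18*k^4*(a1 + a2*(0))*(b1 + b2*(0) + b3*(1)) - 12*k^10*(b1 + b2*(0) + b3*(1)) - 18*k^8*(a1 + a2*(0))^2 + 9*k^14*(a1 + a2*(0)) - k^20 = constantCoeff p1 * ((-10)) := by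
    have h := congrArg (eval ![(0:ℚ), 0, 1]) E1
    simp only [map_add, map_sub, map_mul, map_pow, map_ofNat, map_one, eval_C, eval_X, Matrix.cons_val_zero, Matrix.cons_val_one, Matrix.head_cons, Matrix.cons_val_two, Matrix.tail_cons] at h
    linear_combination h
  have v0m1 : 3*(b1 + b2*(0) + b3*((-1)))^2 + 10*k^2*(a1 + a2*(0))^3 + 18*k^4*(a1 + a2*(0))*(b1 + b2*(0) + b3*((-1))) - 12*k^10*(b1 + b2*(0) + b3*((-1))) - 18*k^8*(a1 + a2*(0))^2 + 9*k^14*(a1 + a2*(0)) - k^20 = constantCoeff p1 * (14) := by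
    have h := congrArg (eval ![(0:ℚ), 0, (-1)]) E1
    simp only [map_add, map_sub, map_mul, map_pow, map_ofNat, map_one, eval_C, eval_X, Matrix.cons_val_zero, Matrix.cons_val_one, Matrix.head_cons, Matrix.cons_val_two, Matrix.tail_cons] at h
    linear_combination h
  have v11 : 3*(b1 + b2*(1) + b3*(1))^2 + 10*k^2*(a1 + a2*(1))^3 + 18*k^4*(a1 + a2*(1))*(b1 + b2*(1) + b3*(1)) - 12*k^10*(b1 + b2*(1) + b3*(1)) - 18*k^8*(a1 + a2*(1))^2 + 9*k^14*(a1 + a2*(1)) - k^20 = constantCoeff p1 * (9) := by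
    have h := congrArg (eval ![(0:ℚ), 1, 1]) E1
    simp only [map_add, map_sub, map_mul, map_pow, map_ofNat, map_one, eval_C, eval_X, Matrix.cons_val_zero, Matrix.cons_val_one, Matrix.head_cons, Matrix.cons_val_two, Matrix.tail_cons] at h
    linear_combination h
  have f1 : 5*(a1 + a2*(1))^4 + 30*k^2*(a1 + a2*(1))^2*(b1 + b2*(1) + b3*(0)) + 15*k^4*(b1 + b2*(1) + b3*(0))^2 - 15*k^14*(b1 + b2*(1) + b3*(0)) - 15*k^12*(a1 + a2*(1))^2 + 10*k^18*(a1 + a2*(1)) - k^24 = constantCoeff q2 * ((-1)) := by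
    have h := congrArg (eval ![(0:ℚ), 1, 0]) E2
    simp only [map_add, map_sub, map_mul, map_pow, map_ofNat, map_one, eval_C, eval_X, Matrix.cons_val_zero, Matrix.cons_val_one, Matrix.head_cons, Matrix.cons_val_two, Matrix.tail_cons] at h
    linear_combination h
  have f2 : 5*(a1 + a2*(1))^4 + 30*k^2*(a1 + a2*(1))^2*(b1 + b2*(1) + b3*((-2))) + 15*k^4*(b1 + b2*(1) + b3*((-2)))^2 - 15*k^14*(b1 + b2*(1) + b3*((-2))) - 15*k^12*(a1 + a2*(1))^2 + 10*k^18*(a1 + a2*(1)) - k^24 = constantCoeff q2 * (29) := by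
    have h := congrArg (eval ![(0:ℚ), 1, (-2)]) E2
    simp only [map_add, map_sub, map_mul, map_pow, map_ofNat, map_one, eval_C, eval_X, Matrix.cons_val_zero, Matrix.cons_val_one, Matrix.head_cons, Matrix.cons_val_two, Matrix.tail_cons] at h
    linear_combination h
  have f3 : 5*(a1 + a2*((5/8 : ℚ)))^4 + 30*k^2*(a1 + a2*((5/8 : ℚ)))^2*(b1 + b2*((5/8 : ℚ)) + b3*((3/16 : ℚ))) + 15*k^4*(b1 + b2*((5/8 : ℚ)) + b3*((3/16 : ℚ)))^2 - 15*k^14*(b1 + b2*((5/8 : ℚ)) + b3*((3/16 : ℚ))) - 15*k^12*(a1 + a2*((5/8 : ℚ)))^2 + 10*k^18*(a1 + a2*((5/8 : ℚ))) - k^24 = constantCoeff q2 * ((269/4096)) := by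
    have h := congrArg (eval ![(0:ℚ), (5/8 : ℚ), (3/16 : ℚ)]) E2
    simp only [map_add, map_sub, map_mul, map_pow, map_ofNat, map_one, eval_C, eval_X, Matrix.cons_val_zero, Matrix.cons_val_one, Matrix.head_cons, Matrix.cons_val_two, Matrix.tail_cons] at h
    linear_combination h
  set c1 : ℚ := constantCoeff p1 with hc1def
  set c2 : ℚ := constantCoeff q2 with hc2def
  have E00 : c1 + 3*b1^2 + 10*k^2*a1^3 + 18*k^4*a1*b1 - 18*k^8*a1^2 - 12*k^10*b1 + 9*k^14*a1 - k^20 = 0 := by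
    linear_combination v00
  have E10 : -9*c1 + 6*b1*b2 + 30*k^2*a1^2*a2 + 18*k^4*a2*b1 + 18*k^4*a1*b2 - 36*k^8*a1*a2 - 12*k^10*b2 + 9*k^14*a2 = 0 := by
    linear_combination (-1/2)*v00 + v10 + (-1/3)*vm10 + (-1/6)*v20
  have E20 : 18*c1 + 3*b2^2 + 30*k^2*a1*a2^2 + 18*k^4*a2*b2 - 18*k^8*a2^2 = 0 := by
    linear_combination (-1)*v00 + (1/2)*v10 + (1/2)*vm10
  have E30 : -10*c1 + 10*k^2*a2^3 = 0 := by
    linear_combination (1/2)*v00 + (-1/2)*v10 + (-1/6)*vm10 + (1/6)*v20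
  have E01 : 12*c1 + 6*b1*b3 + 18*k^4*a1*b3 - 12*k^10*b3 = 0 := by
    linear_combination (1/2)*v01 + (-1/2)*v0m1
  have E02 : -3*c1 + 3*b3^2 = 0 := by
    linear_combination (-1)*v00 + (1/2)*v01 + (1/2)*v0m1
  have E11 : -18*c1 + 6*b2*b3 + 18*k^4*a2*b3 = 0 := by
    linear_combination v00 + (-1)*v10 + (-1)*v01 + v11
  clear v00 v10 vm10 v20 v01 v0m1 v11 E1 E2 E1' E2' hs1 hs2 hs3 ht1 ht2 hpe0 hpe1 hpe2 hpe3 hpe4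
  rcases eq_or_ne k 0 with hk | hk
  · -- k = 0
    subst hk
    have hc1 : c1 = 0 := by linear_combination (-1/10)*E30
    have hb3 : b3 = 0 := by
      have h : b3^2 = 0 := by linear_combination (1/3)*E02 + hc1
      exact (pow_eq_zero_iff (by norm_num : (2:ℕ) ≠ 0)).mp h
    have hb2 : b2 = 0 := by
      have h : b2^2 = 0 := by linear_combination (1/3)*E20 - 6*hc1
      exact (pow_eq_zero_iff (by norm_num : (2:ℕ) ≠ 0)).mp h
    have hb1 : b1 = 0 := by
      have h : b1^2 = 0 := by linear_combination (1/3)*E00 - (1/3)*hc1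
      exact (pow_eq_zero_iff (by norm_num : (2:ℕ) ≠ 0)).mp h
    rw [hb1, hb2, hb3] at f1 f3
    have hc2 : c2 = 0 := by
      rw [hb1, hb2, hb3] at f2
      linear_combination (1/30)*f1 - (1/30)*f2
    have h4 : (a1 + a2)^4 = 0 := by linear_combination (1/5)*f1 - (1/5)*hc2
    have h5 : (a1 + (5/8)*a2)^4 = 0 := by
      linear_combination (1/5)*f3 + (269/20480)*hc2
    have h4' : a1 + a2 = 0 := pow_eq_zero_iff (by norm_num : (4:ℕ) ≠ 0) |>.mp h4
    have h5' : a1 + (5/8)*a2 = 0 := pow_eq_zero_iff (by norm_num : (4:ℕ) ≠ 0) |>.mp h5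
    refine ⟨by linarith, hb1, hb2, by norm_num; linarith, by norm_num [hb3]⟩
  · -- k ≠ 0
    rcases eq_or_ne b3 0 with hb3 | hb3
    · -- b3 = 0 : resultant case
      subst hb3
      have hc1 : c1 = 0 := by linear_combination (-1/3)*E02
      have ha2 : a2 = 0 := by
        have h : k^2 * a2^3 = 0 := by linear_combination (1/10)*E30 + hc1
        have h2 : a2^3 = 0 := by
          rcases mul_eq_zero.mp h with h' | h'
          · exact absurd ((pow_eq_zero_iff (by norm_num : (2:ℕ) ≠ 0)).mp h') hk
          · exact h'
        exact (pow_eq_zero_iff (by norm_num : (3:ℕ) ≠ 0)).mp h2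
      have hb2 : b2 = 0 := by
        have h : b2^2 = 0 := by
          rw [ha2] at E20
          linear_combination (1/3)*E20 - 6*hc1
        exact (pow_eq_zero_iff (by norm_num : (2:ℕ) ≠ 0)).mp h
      have G20eq : 3*b1^2 + 10*k^2*a1^3 + 18*k^4*a1*b1 - 18*k^8*a1^2 - 12*k^10*b1 + 9*k^14*a1 - k^20 = 0 := by
        linear_combination E00 - hc1
      rw [ha2, hb2] at f1 f2
      have hc2 : c2 = 0 := by linear_combination (1/30)*f1 - (1/30)*f2
      have G24eq : 5*a1^4 + 30*k^2*a1^2*b1 + 15*k^4*b1^2 - 15*k^14*b1 - 15*k^12*a1^2 + 10*k^18*a1 - k^24 = 0 := by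
        linear_combination f1 - hc2
      have hoct : 225*a1^8 + 14400*k^6*a1^7 - 70650*k^12*a1^6 + 122400*k^18*a1^5
          - 98415*k^24*a1^4 + 34470*k^30*a1^3 - 315*k^36*a1^2 - 2925*k^42*a1 + 549*k^48 = 0 := by
        linear_combination (2475*k^4*a1^4 + 1350*k^6*a1^2*b1 + (-5850:ℚ)*k^10*a1^3 + (-4050:ℚ)*k^12*a1*b1 + (-675:ℚ)*k^16*a1^2 + 2025*k^18*b1 + 5625*k^22*a1 + (-2205:ℚ)*k^28) * G20eq
          + (45*a1^4 + (-270:ℚ)*k^2*a1^2*b1 + (-2070:ℚ)*k^6*a1^3 + 810*k^8*a1*b1 + 6615*k^12*a1^2 + (-405:ℚ)*k^14*b1 + (-5985:ℚ)*k^18*a1 + 1656*k^24) * G24eq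
      have hk6 : k^6 ≠ 0 := pow_ne_zero 6 hk
      have hq8 : 225*(a1/k^6)^8 + 14400*(a1/k^6)^7 - 70650*(a1/k^6)^6 + 122400*(a1/k^6)^5
          - 98415*(a1/k^6)^4 + 34470*(a1/k^6)^3 - 315*(a1/k^6)^2 - 2925*(a1/k^6) + 549 = 0 := by
        have hdiv : 225*(a1/k^6)^8 + 14400*(a1/k^6)^7 - 70650*(a1/k^6)^6 + 122400*(a1/k^6)^5
            - 98415*(a1/k^6)^4 + 34470*(a1/k^6)^3 - 315*(a1/k^6)^2 - 2925*(a1/k^6) + 549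
            = (225*a1^8 + 14400*k^6*a1^7 - 70650*k^12*a1^6 + 122400*k^18*a1^5
              - 98415*k^24*a1^4 + 34470*k^30*a1^3 - 315*k^36*a1^2 - 2925*k^42*a1 + 549*k^48)/(k^6)^8 := by
          field_simp
        rw [hdiv, hoct, zero_div]
      exact absurd hq8 (octic_ne (a1/k^6))
    · -- b3 ≠ 0
      have hb2 : b2 = 3*b3 - 3*k^4*a2 := by
        have h : b3 * (6*b2 + 18*k^4*a2 - 18*b3) = 0 := by linear_combination E11 - 6*E02
        have h2 := (mul_eq_zero.mp h).resolve_left hb3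
        linarith
      have hb1 : b1 = -2*b3 - 3*k^4*a1 + 2*k^10 := by
        have h : b3 * (6*b1 + 18*k^4*a1 - 12*k^10 + 12*b3) = 0 := by linear_combination E01 + 4*E02
        have h2 := (mul_eq_zero.mp h).resolve_left hb3
        linarith
      have ha2ne : a2 ≠ 0 := by
        intro h
        apply hb3
        have hc1 : c1 = 0 := by linear_combination (-1/10)*E30 + (k^2*a2^2)*h
        have hsq : b3^2 = 0 := by linear_combination (1/3)*E02 + hc1
        exact (pow_eq_zero_iff (by norm_num : (2:ℕ) ≠ 0)).mp hsq
      rw [hb2] at E20 E10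
      rw [hb1] at E00 E10
      have key1 : 15*k^2*a2^2*(3*a2 - 3*k^6 + 2*a1) = 0 := by
        linear_combination E20 + (9/2)*E30 - 9*E02
      have ha2eq : a2 = k^6 - (2/3)*a1 := by
        have hne : 15*k^2*a2^2 ≠ 0 := by
          intro h
          rcases mul_eq_zero.mp h with h' | h'
          · rcases mul_eq_zero.mp h' with h'' | h''
            · norm_num at h''
            · exact hk ((pow_eq_zero_iff (by norm_num : (2:ℕ) ≠ 0)).mp h'')
          · exact ha2ne ((pow_eq_zero_iff (by norm_num : (2:ℕ) ≠ 0)).mp h')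
        have h2 := (mul_eq_zero.mp key1).resolve_left hne
        linarith
      rw [ha2eq] at E10
      have key2 : k^2*a1*(38*a1^2 - 171*k^6*a1 + 93*k^12) = 0 := by
        linear_combination 9*E00 + (13/5)*E10 - (24/5)*E02
      have ha1 : a1 = 0 := by
        rcases mul_eq_zero.mp key2 with h' | hquad
        · rcases mul_eq_zero.mp h' with h'' | h''
          · exact absurd ((pow_eq_zero_iff (by norm_num : (2:ℕ) ≠ 0)).mp h'') hk
          · exact h''
        · exfalso
          have hr : (76*a1 - 171*k^6)^2 = 15105*(k^6)^2 := by linear_combination 152*hquad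
          have hk6 : k^6 ≠ 0 := pow_ne_zero 6 hk
          have hq : ((76*a1 - 171*k^6)/k^6)^2 = 15105 := by
            rw [div_pow]
            rw [hr]
            field_simp
          exact sq_ne_15105 _ hq
      subst ha1
      have ha2' : a2 = k^6 := by rw [ha2eq]; ring
      have hb3sq : (b3 - k^10) * (b3 + k^10) = 0 := by
        linear_combination (1/3)*E02 - (1/10)*E30 + k^2*(a2^2 + a2*k^6 + k^12)*ha2'
      rcases mul_eq_zero.mp hb3sq with h' | h'
      · -- b3 = k^10
        refine ⟨rfl, by linear_combination hb1 - 2*h', by linear_combination hb2 + 3*h' - 3*k^4*ha2', ha2', by linarith⟩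
      · -- b3 = -k^10 : contradiction
        exfalso
        have hb3v : b3 = -k^10 := by linarith
        rw [hb1, hb2, ha2', hb3v] at f1 f2
        have hk24 : k^24 = 0 := by linear_combination (29/840)*f1 + (1/840)*f2
        exact hk (pow_eq_zero_iff (by norm_num : (24:ℕ) ≠ 0) |>.mp hk24)
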